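/- Suppose X^n, Y^n, M, W1, W2 are jointly distributed finite discrete random variables such that W1 and W2 are independent, and the Markov chain X^n − (M,W1) − (M,W2) − Y^n holds (i.e., X^n and (M,W2,Y^n) are conditionally independent given (M,W1), and Y^n and (M,W1,X^n) are conditionally independent given (M,W2)). Then I(X^n;Y^n|M) ≤ H(M). -/

import Mathlib

open Finset

def IsPMF {Ω : Type*} [Fintype Ω] (p : Ω → ℝ) : Prop :=
  (∀ ω, 0 ≤ p ω) ∧ ∑ ω, p ω = 1

noncomputable def pr {Ω : Type*} [Fintype Ω] {α : Type*} [Fintype α] [DecidableEq α]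
    (p : Ω → ℝ) (X : Ω → α) (x : α) : ℝ :=
  ∑ ω ∈ Finset.univ.filter (fun ω => X ω = x), p ω

/-- Shannon entropy (base 2) of the random variable `X` under `p`. -/
noncomputable def ent {Ω : Type*} [Fintype Ω] {α : Type*} [Fintype α] [DecidableEq α]
    (p : Ω → ℝ) (X : Ω → α) : ℝ :=
  -∑ x, pr p X x * Real.logb 2 (pr p X x)

/-- Conditional entropy H(X | U). -/
noncomputable def centH {Ω : Type*} [Fintype Ω] {α β : Type*} [Fintype α] [DecidableEq α]
    [Fintype β] [DecidableEq β] (p : Ω → ℝ) (X : Ω → α) (U : Ω → β) : ℝ :=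
  ent p (fun ω => (X ω, U ω)) - ent p U

/-- Mutual information I(X;Y). -/
noncomputable def mi {Ω : Type*} [Fintype Ω] {α β : Type*} [Fintype α] [DecidableEq α]
    [Fintype β] [DecidableEq β] (p : Ω → ℝ) (X : Ω → α) (Y : Ω → β) : ℝ :=
  ent p X + ent p Y - ent p (fun ω => (X ω, Y ω))

/-- Conditional mutual information I(X;Y|U). -/
noncomputable def cmi {Ω : Type*} [Fintype Ω] {α β γ : Type*} [Fintype α] [DecidableEq α]
    [Fintype β] [DecidableEq β] [Fintype γ] [DecidableEq γ]
    (p : Ω → ℝ) (X : Ω → α) (Y : Ω → β) (U : Ω → γ) : ℝ :=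
  centH p X U + centH p Y U - centH p (fun ω => (X ω, Y ω)) U

def IndepRV {Ω : Type*} [Fintype Ω] {α β : Type*} [Fintype α] [DecidableEq α]
    [Fintype β] [DecidableEq β] (p : Ω → ℝ) (X : Ω → α) (Y : Ω → β) : Prop :=
  ∀ x y, pr p (fun ω => (X ω, Y ω)) (x, y) = pr p X x * pr p Y y

section Aux

lemma kl_term' {a b c d : ℝ} (ha : 0 ≤ a) (hb : 0 ≤ b) (hc : 0 ≤ c) (hd : 0 ≤ d)
    (hab : a ≤ b) (hac : a ≤ c) (had : a ≤ d) :
    (a - b * c / d) / Real.log 2 ≤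
      a * Real.logb 2 a + a * Real.logb 2 d - a * Real.logb 2 b - a * Real.logb 2 c := by
  have hlg : 0 < Real.log 2 := Real.log_pos one_lt_two
  rcases eq_or_lt_of_le ha with h0 | hpos
  · rw [← h0]
    simp only [zero_mul, add_zero, sub_zero, zero_sub, zero_add]
    have h1 : 0 ≤ b * c / d := by positivity
    exact div_nonpos_of_nonpos_of_nonneg (by linarith) hlg.le
  · have hb' : 0 < b := lt_of_lt_of_le hpos hab
    have hc' : 0 < c := lt_of_lt_of_le hpos hac
    have hd' : 0 < d := lt_of_lt_of_le hpos had
    rw [div_le_iff₀ hlg]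
    have h1 : Real.log (b * c / (a * d)) ≤ b * c / (a * d) - 1 :=
      Real.log_le_sub_one_of_pos (by positivity)
    have h3 : a * (b * c / (a * d)) = b * c / d := by
      field_simp
    have h4 : a * Real.log (b * c / (a * d)) ≤ a * (b * c / (a * d) - 1) :=
      mul_le_mul_of_nonneg_left h1 ha
    rw [mul_sub, mul_one, h3] at h4
    have h2 : Real.logb 2 a + Real.logb 2 d - Real.logb 2 b - Real.logb 2 c
        = -(Real.log (b * c / (a * d))) / Real.log 2 := by
      rw [Real.log_div (by positivity) (by positivity), Real.log_mul hb'.ne' hc'.ne',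
        Real.log_mul hpos.ne' hd'.ne']
      simp only [Real.logb]
      ring
    have h6 : a * Real.logb 2 a + a * Real.logb 2 d - a * Real.logb 2 b - a * Real.logb 2 c
        = a * (-(Real.log (b * c / (a * d))) / Real.log 2) := by
      linear_combination a * h2
    rw [h6]
    have h7 : a * (-(Real.log (b * c / (a * d))) / Real.log 2) * Real.log 2
        = -(a * Real.log (b * c / (a * d))) := by
      field_simp
    rw [h7]
    linarith

variable {α β γ : Type*} [Fintype α] [Fintype β] [Fintype γ]

lemma sum_rot (f : α → β → γ → ℝ) :
    ∑ x, ∑ y, ∑ u, f x y u = ∑ u, ∑ x, ∑ y, f x y u := by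
  calc ∑ x, ∑ y, ∑ u, f x y u = ∑ x, ∑ u, ∑ y, f x y u :=
        Finset.sum_congr rfl fun _ _ => Finset.sum_comm
    _ = ∑ u, ∑ x, ∑ y, f x y u := Finset.sum_comm

lemma kl_sum_nonneg (q : α → β → γ → ℝ) (hq : ∀ x y u, 0 ≤ q x y u) :
    0 ≤ (∑ x, ∑ y, ∑ u, q x y u * Real.logb 2 (q x y u))
      + (∑ u, (∑ x, ∑ y, q x y u) * Real.logb 2 (∑ x, ∑ y, q x y u))
      - (∑ x, ∑ u, (∑ y, q x y u) * Real.logb 2 (∑ y, q x y u))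
      - (∑ y, ∑ u, (∑ x, q x y u) * Real.logb 2 (∑ x, q x y u)) := by
  have hq1 : ∀ x y u, q x y u ≤ ∑ y', q x y' u :=
    fun x y u => Finset.single_le_sum (fun i _ => hq x i u) (mem_univ y)
  have hq2 : ∀ x y u, q x y u ≤ ∑ x', q x' y u :=
    fun x y u => Finset.single_le_sum (fun i _ => hq i y u) (mem_univ x)
  have hq3 : ∀ x y u, q x y u ≤ ∑ x', ∑ y', q x' y' u := fun x y u =>
    (hq1 x y u).trans (Finset.single_le_sum (fun i _ => Finset.sum_nonneg fun j _ => hq i j u)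
      (mem_univ x))
  have e1 : ∑ x, ∑ u, (∑ y, q x y u) * Real.logb 2 (∑ y, q x y u)
      = ∑ x, ∑ y, ∑ u, q x y u * Real.logb 2 (∑ y', q x y' u) := by
    refine Finset.sum_congr rfl fun x _ => ?_
    rw [Finset.sum_comm]
    exact Finset.sum_congr rfl fun u _ => Finset.sum_mul _ _ _
  have e2 : ∑ y, ∑ u, (∑ x, q x y u) * Real.logb 2 (∑ x, q x y u)
      = ∑ x, ∑ y, ∑ u, q x y u * Real.logb 2 (∑ x', q x' y u) := by
    calc ∑ y, ∑ u, (∑ x, q x y u) * Real.logb 2 (∑ x, q x y u)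
        = ∑ y, ∑ u, ∑ x, q x y u * Real.logb 2 (∑ x', q x' y u) :=
          Finset.sum_congr rfl fun y _ => Finset.sum_congr rfl fun u _ => Finset.sum_mul _ _ _
      _ = ∑ x, ∑ y, ∑ u, q x y u * Real.logb 2 (∑ x', q x' y u) :=
          sum_rot (fun y u x => q x y u * Real.logb 2 (∑ x', q x' y u))
  have e3 : ∑ u, (∑ x, ∑ y, q x y u) * Real.logb 2 (∑ x, ∑ y, q x y u)
      = ∑ x, ∑ y, ∑ u, q x y u * Real.logb 2 (∑ x', ∑ y', q x' y' u) := by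
    calc ∑ u, (∑ x, ∑ y, q x y u) * Real.logb 2 (∑ x, ∑ y, q x y u)
        = ∑ u, ∑ x, ∑ y, q x y u * Real.logb 2 (∑ x', ∑ y', q x' y' u) := by
          refine Finset.sum_congr rfl fun u _ => ?_
          rw [Finset.sum_mul]
          exact Finset.sum_congr rfl fun x _ => Finset.sum_mul _ _ _
      _ = ∑ x, ∑ y, ∑ u, q x y u * Real.logb 2 (∑ x', ∑ y', q x' y' u) :=
          (sum_rot _).symm
  rw [e1, e2, e3]
  have merge : (∑ x, ∑ y, ∑ u, q x y u * Real.logb 2 (q x y u))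
      + (∑ x, ∑ y, ∑ u, q x y u * Real.logb 2 (∑ x', ∑ y', q x' y' u))
      - (∑ x, ∑ y, ∑ u, q x y u * Real.logb 2 (∑ y', q x y' u))
      - (∑ x, ∑ y, ∑ u, q x y u * Real.logb 2 (∑ x', q x' y u))
      = ∑ x, ∑ y, ∑ u, (q x y u * Real.logb 2 (q x y u)
          + q x y u * Real.logb 2 (∑ x', ∑ y', q x' y' u)
          - q x y u * Real.logb 2 (∑ y', q x y' u)
          - q x y u * Real.logb 2 (∑ x', q x' y u)) := by
    simp only [Finset.sum_sub_distrib, Finset.sum_add_distrib]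
  rw [merge]
  have lower : ∑ x, ∑ y, ∑ u,
      ((q x y u - (∑ y', q x y' u) * (∑ x', q x' y u) / (∑ x', ∑ y', q x' y' u)) / Real.log 2)
      ≤ ∑ x, ∑ y, ∑ u, (q x y u * Real.logb 2 (q x y u)
          + q x y u * Real.logb 2 (∑ x', ∑ y', q x' y' u)
          - q x y u * Real.logb 2 (∑ y', q x y' u)
          - q x y u * Real.logb 2 (∑ x', q x' y u)) := by
    refine Finset.sum_le_sum fun x _ => Finset.sum_le_sum fun y _ =>
      Finset.sum_le_sum fun u _ => ?_
    exact kl_term' (hq x y u) (Finset.sum_nonneg fun i _ => hq x i u)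
      (Finset.sum_nonneg fun i _ => hq i y u)
      (Finset.sum_nonneg fun i _ => Finset.sum_nonneg fun j _ => hq i j u)
      (hq1 x y u) (hq2 x y u) (hq3 x y u)
  refine le_trans (le_of_eq ?_) lower
  symm
  rw [sum_rot]
  refine Finset.sum_eq_zero fun u _ => ?_
  have hsplit : ∑ x, ∑ y,
      ((q x y u - (∑ y', q x y' u) * (∑ x', q x' y u) / (∑ x', ∑ y', q x' y' u)) / Real.log 2)
      = (∑ x, ∑ y, q x y u) / Real.log 2
        - (∑ x, ∑ y, (∑ y', q x y' u) * (∑ x', q x' y u))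
            / (∑ x', ∑ y', q x' y' u) / Real.log 2 := by
    simp only [sub_div, div_div, Finset.sum_sub_distrib, ← Finset.sum_div]
  rw [hsplit]
  have hprod : ∑ x, ∑ y, (∑ y', q x y' u) * (∑ x', q x' y u)
      = (∑ x, ∑ y', q x y' u) * (∑ y, ∑ x', q x' y u) := by
    rw [Finset.sum_mul_sum]
  have hM : (∑ y, ∑ x', q x' y u) = ∑ x', ∑ y', q x' y' u := Finset.sum_comm
  rw [hprod, hM]
  set M := ∑ x', ∑ y', q x' y' u with hMdef
  by_cases h : M = 0
  · simp [h]
  · rw [mul_div_assoc, div_self h, mul_one, sub_self]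

end Aux

section Prob

variable {Ω : Type*} [Fintype Ω] {α β γ κ : Type*} [Fintype α] [DecidableEq α]
  [Fintype β] [DecidableEq β] [Fintype γ] [DecidableEq γ] [Fintype κ] [DecidableEq κ]

lemma pr_nonneg (p : Ω → ℝ) (hp : ∀ ω, 0 ≤ p ω) (X : Ω → α) (x : α) : 0 ≤ pr p X x :=
  Finset.sum_nonneg fun _ _ => hp _

lemma sum_pr (p : Ω → ℝ) (X : Ω → α) : ∑ x, pr p X x = ∑ ω, p ω := by
  unfold pr
  exact Finset.sum_fiberwise_of_maps_to (fun x _ => Finset.mem_univ _) p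

lemma pr_comp_apply (p : Ω → ℝ) (X : Ω → α) {f : α → κ} (hf : Function.Injective f) (a : α) :
    pr p (fun ω => f (X ω)) (f a) = pr p X a := by
  unfold pr
  congr 1
  apply Finset.filter_congr
  intro ω _
  simp [hf.eq_iff]

lemma ent_comp (p : Ω → ℝ) (X : Ω → α) {f : α → κ} (hf : Function.Injective f) :
    ent p (fun ω => f (X ω)) = ent p X := by
  unfold ent
  congr 1
  symm
  calc ∑ x : α, pr p X x * Real.logb 2 (pr p X x)
      = ∑ x : α, pr p (fun ω => f (X ω)) (f x) * Real.logb 2 (pr p (fun ω => f (X ω)) (f x)) := by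
        simp [pr_comp_apply p X hf]
    _ = ∑ k ∈ Finset.univ.image f,
          pr p (fun ω => f (X ω)) k * Real.logb 2 (pr p (fun ω => f (X ω)) k) := by
        rw [Finset.sum_image (fun a _ b _ h => hf h)]
    _ = ∑ k : κ, pr p (fun ω => f (X ω)) k * Real.logb 2 (pr p (fun ω => f (X ω)) k) := by
        apply Finset.sum_subset (Finset.subset_univ _)
        intro k _ hk
        have : pr p (fun ω => f (X ω)) k = 0 := by
          unfold pr
          rw [Finset.filter_false_of_mem, Finset.sum_empty]
          intro ω _ h
          exact hk (Finset.mem_image.2 ⟨X ω, Finset.mem_univ _, h⟩)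
        rw [this, zero_mul]

lemma pr_marg_pair (p : Ω → ℝ) (X : Ω → α) (Y : Ω → β) (y : β) :
    pr p Y y = ∑ x, pr p (fun ω => (X ω, Y ω)) (x, y) := by
  unfold pr
  rw [← Finset.sum_fiberwise_of_maps_to (g := X) (fun ω _ => Finset.mem_univ (X ω)) p]
  apply Finset.sum_congr rfl
  intro x _
  rw [Finset.filter_filter]
  apply Finset.sum_congr _ (fun _ _ => rfl)
  apply Finset.filter_congr
  intro ω _
  simp [Prod.ext_iff, and_comm]

lemma cmi_nonneg (p : Ω → ℝ) (hp : ∀ ω, 0 ≤ p ω) (X : Ω → α) (Y : Ω → β) (U : Ω → γ) :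
    0 ≤ cmi p X Y U := by
  set q : α → β → γ → ℝ := fun x y u => pr p (fun ω => (X ω, Y ω, U ω)) (x, y, u) with hqdef
  have hq : ∀ x y u, 0 ≤ q x y u := fun x y u => pr_nonneg p hp _ _
  have key := kl_sum_nonneg q hq
  have h1 : ∀ x u, pr p (fun ω => (X ω, U ω)) (x, u) = ∑ y, q x y u := by
    intro x u
    rw [pr_marg_pair p Y (fun ω => (X ω, U ω)) (x, u)]
    refine Finset.sum_congr rfl fun y _ => ?_
    exact pr_comp_apply p (fun ω => (X ω, Y ω, U ω))
      (f := fun z : α × β × γ => (z.2.1, (z.1, z.2.2)))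
      (fun a b h => by simp_all [Prod.ext_iff]) (x, y, u)
  have h2 : ∀ y u, pr p (fun ω => (Y ω, U ω)) (y, u) = ∑ x, q x y u := by
    intro y u
    exact pr_marg_pair p X (fun ω => (Y ω, U ω)) (y, u)
  have h3 : ∀ u, pr p U u = ∑ x, ∑ y, q x y u := by
    intro u
    rw [pr_marg_pair p X U u]
    exact Finset.sum_congr rfl fun x _ => h1 x u
  have eXU : ent p (fun ω => (X ω, U ω))
      = -∑ x, ∑ u, (∑ y, q x y u) * Real.logb 2 (∑ y, q x y u) := by
    unfold ent
    rw [Fintype.sum_prod_type]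
    simp only [h1]
  have eYU : ent p (fun ω => (Y ω, U ω))
      = -∑ y, ∑ u, (∑ x, q x y u) * Real.logb 2 (∑ x, q x y u) := by
    unfold ent
    rw [Fintype.sum_prod_type]
    simp only [h2]
  have eU : ent p U = -∑ u, (∑ x, ∑ y, q x y u) * Real.logb 2 (∑ x, ∑ y, q x y u) := by
    unfold ent
    simp only [h3]
  have e0 : ent p (fun ω => ((X ω, Y ω), U ω)) = ent p (fun ω => (X ω, Y ω, U ω)) :=
    ent_comp p (fun ω => (X ω, Y ω, U ω)) (f := fun z : α × β × γ => ((z.1, z.2.1), z.2.2))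
      (fun a b h => by simp_all [Prod.ext_iff])
  have eXYU : ent p (fun ω => (X ω, Y ω, U ω))
      = -∑ x, ∑ y, ∑ u, q x y u * Real.logb 2 (q x y u) := by
    unfold ent
    rw [Fintype.sum_prod_type]
    simp only [Fintype.sum_prod_type, hqdef]
  unfold cmi centH
  rw [eXU, eYU, eU, e0, eXYU]
  linarith [key]

lemma ent_const (p : Ω → ℝ) (h1 : ∑ ω, p ω = 1) : ent p (fun _ => (() : Unit)) = 0 := by
  unfold ent pr
  simp [eq_iff_true_of_subsingleton, h1]

lemma mi_nonneg (p : Ω → ℝ) (h0 : ∀ ω, 0 ≤ p ω) (h1 : ∑ ω, p ω = 1)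
    (X : Ω → α) (Y : Ω → β) : 0 ≤ mi p X Y := by
  have key := cmi_nonneg p h0 X Y (fun _ => (() : Unit))
  unfold cmi centH at key
  have r1 : ent p (fun ω => (X ω, (() : Unit))) = ent p X :=
    ent_comp p X (f := fun a : α => (a, ())) (fun a b h => by simp_all [Prod.ext_iff])
  have r2 : ent p (fun ω => (Y ω, (() : Unit))) = ent p Y :=
    ent_comp p Y (f := fun a : β => (a, ())) (fun a b h => by simp_all [Prod.ext_iff])
  have r3 : ent p (fun ω => ((X ω, Y ω), (() : Unit))) = ent p (fun ω => (X ω, Y ω)) :=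
    ent_comp p (fun ω => (X ω, Y ω)) (f := fun a : α × β => (a, ()))
      (fun a b h => by simp_all [Prod.ext_iff])
  rw [r1, r2, r3, ent_const p h1] at key
  unfold mi
  linarith

lemma centH_nonneg (p : Ω → ℝ) (h0 : ∀ ω, 0 ≤ p ω) (X : Ω → α) (U : Ω → γ) :
    0 ≤ centH p X U := by
  have key := cmi_nonneg p h0 X X U
  unfold cmi centH at key
  have r : ent p (fun ω => ((X ω, X ω), U ω)) = ent p (fun ω => (X ω, U ω)) :=
    ent_comp p (fun ω => (X ω, U ω)) (f := fun z : α × γ => ((z.1, z.1), z.2))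
      (fun a b h => by simp_all [Prod.ext_iff])
  rw [r] at key
  unfold centH
  linarith

lemma mi_indep_eq_zero (p : Ω → ℝ) (h0 : ∀ ω, 0 ≤ p ω) (h1 : ∑ ω, p ω = 1)
    (A : Ω → α) (B : Ω → β) (hInd : IndepRV p A B) : mi p A B = 0 := by
  have hsplit : ∀ (s t : ℝ), s * t * Real.logb 2 (s * t)
      = t * (s * Real.logb 2 s) + s * (t * Real.logb 2 t) := by
    intro s t
    rcases eq_or_ne s 0 with h | h
    · simp [h]
    rcases eq_or_ne t 0 with h' | h'
    · simp [h']
    rw [Real.logb_mul h h']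
    ring
  have hInd' : ∀ x y, pr p (fun ω => (A ω, B ω)) (x, y) = pr p A x * pr p B y := hInd
  have eAB : ent p (fun ω => (A ω, B ω)) = ent p A + ent p B := by
    unfold ent
    rw [Fintype.sum_prod_type]
    simp only [hInd', hsplit]
    simp only [Finset.sum_add_distrib, ← Finset.mul_sum, ← Finset.sum_mul]
    rw [sum_pr p A, sum_pr p B, h1]
    ring
  unfold mi
  rw [eAB]
  ring

end Prob

/-- If `W₁ ⊥ W₂` and the Markov chain `Xⁿ − (M,W₁) − (M,W₂) − Yⁿ` holds
(expressed via vanishing conditional mutual informations), then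
`I(Xⁿ;Yⁿ|M) ≤ H(M)`. -/
theorem stmt4 {Ω α β γ δ ε : Type*} [Fintype Ω] [Fintype α] [DecidableEq α]
    [Fintype β] [DecidableEq β] [Fintype γ] [DecidableEq γ]
    [Fintype δ] [DecidableEq δ] [Fintype ε] [DecidableEq ε]
    (p : Ω → ℝ) (hp : IsPMF p)
    (Xn : Ω → α) (Yn : Ω → β) (M : Ω → γ) (W₁ : Ω → δ) (W₂ : Ω → ε)
    (hInd : IndepRV p W₁ W₂)
    (hMarkov1 : cmi p Xn (fun ω => (M ω, W₂ ω, Yn ω)) (fun ω => (M ω, W₁ ω)) = 0)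
    (hMarkov2 : cmi p Yn (fun ω => (M ω, W₁ ω, Xn ω)) (fun ω => (M ω, W₂ ω)) = 0) :
    cmi p Xn Yn M ≤ ent p M := by
  obtain ⟨h0, h1⟩ := hp
  -- nonnegativity facts
  have n1 : 0 ≤ mi p W₁ M := mi_nonneg p h0 h1 W₁ M
  have n2 : 0 ≤ cmi p Yn W₁ (fun ω => (Xn ω, M ω, W₂ ω)) := cmi_nonneg p h0 _ _ _
  have n3 : 0 ≤ cmi p Xn W₂ (fun ω => (Yn ω, M ω)) := cmi_nonneg p h0 _ _ _
  have n4 : 0 ≤ cmi p W₁ W₂ (fun ω => (Xn ω, M ω)) := cmi_nonneg p h0 _ _ _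
  have n5 : 0 ≤ cmi p Xn Yn (fun ω => (M ω, W₁ ω, W₂ ω)) := cmi_nonneg p h0 _ _ _
  have n6 : 0 ≤ mi p M W₂ := mi_nonneg p h0 h1 M W₂
  have n7 : 0 ≤ centH p M (fun ω => (W₁ ω, W₂ ω)) := centH_nonneg p h0 _ _
  have hI : mi p W₁ W₂ = 0 := mi_indep_eq_zero p h0 h1 W₁ W₂ hInd
  -- canonicalization of entropies of tuples
  have c2 : ent p (fun ω => ((M ω, W₂ ω, Yn ω), (M ω, W₁ ω)))
      = ent p (fun ω => (Yn ω, M ω, W₁ ω, W₂ ω)) :=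
    ent_comp p (fun ω => (Yn ω, M ω, W₁ ω, W₂ ω))
      (f := fun z : β × γ × δ × ε => ((z.2.1, z.2.2.2, z.1), (z.2.1, z.2.2.1)))
      (fun a b h => by simp_all [Prod.ext_iff])
  have c3 : ent p (fun ω => ((Xn ω, (M ω, W₂ ω, Yn ω)), (M ω, W₁ ω)))
      = ent p (fun ω => (Xn ω, Yn ω, M ω, W₁ ω, W₂ ω)) :=
    ent_comp p (fun ω => (Xn ω, Yn ω, M ω, W₁ ω, W₂ ω))
      (f := fun z : α × β × γ × δ × ε =>
        ((z.1, (z.2.2.1, z.2.2.2.2, z.2.1)), (z.2.2.1, z.2.2.2.1)))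
      (fun a b h => by simp_all [Prod.ext_iff])
  have c6 : ent p (fun ω => ((M ω, W₁ ω, Xn ω), (M ω, W₂ ω)))
      = ent p (fun ω => (Xn ω, M ω, W₁ ω, W₂ ω)) :=
    ent_comp p (fun ω => (Xn ω, M ω, W₁ ω, W₂ ω))
      (f := fun z : α × γ × δ × ε => ((z.2.1, z.2.2.1, z.1), (z.2.1, z.2.2.2)))
      (fun a b h => by simp_all [Prod.ext_iff])
  have c7 : ent p (fun ω => ((Yn ω, (M ω, W₁ ω, Xn ω)), (M ω, W₂ ω)))
      = ent p (fun ω => (Xn ω, Yn ω, M ω, W₁ ω, W₂ ω)) :=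
    ent_comp p (fun ω => (Xn ω, Yn ω, M ω, W₁ ω, W₂ ω))
      (f := fun z : α × β × γ × δ × ε =>
        ((z.2.1, (z.2.2.1, z.2.2.2.1, z.1)), (z.2.2.1, z.2.2.2.2)))
      (fun a b h => by simp_all [Prod.ext_iff])
  have c9 : ent p (fun ω => ((Xn ω, Yn ω), M ω))
      = ent p (fun ω => (Xn ω, Yn ω, M ω)) :=
    ent_comp p (fun ω => (Xn ω, Yn ω, M ω))
      (f := fun z : α × β × γ => ((z.1, z.2.1), z.2.2))
      (fun a b h => by simp_all [Prod.ext_iff])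
  have c10 : ent p (fun ω => (W₁ ω, M ω)) = ent p (fun ω => (M ω, W₁ ω)) :=
    ent_comp p (fun ω => (M ω, W₁ ω))
      (f := fun z : γ × δ => (z.2, z.1))
      (fun a b h => by simp_all [Prod.ext_iff])
  have c11 : ent p (fun ω => (Yn ω, (Xn ω, M ω, W₂ ω)))
      = ent p (fun ω => (Xn ω, Yn ω, M ω, W₂ ω)) :=
    ent_comp p (fun ω => (Xn ω, Yn ω, M ω, W₂ ω))
      (f := fun z : α × β × γ × ε => (z.2.1, (z.1, z.2.2.1, z.2.2.2)))
      (fun a b h => by simp_all [Prod.ext_iff])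
  have c12 : ent p (fun ω => (W₁ ω, (Xn ω, M ω, W₂ ω)))
      = ent p (fun ω => (Xn ω, M ω, W₁ ω, W₂ ω)) :=
    ent_comp p (fun ω => (Xn ω, M ω, W₁ ω, W₂ ω))
      (f := fun z : α × γ × δ × ε => (z.2.2.1, (z.1, z.2.1, z.2.2.2)))
      (fun a b h => by simp_all [Prod.ext_iff])
  have c13 : ent p (fun ω => ((Yn ω, W₁ ω), (Xn ω, M ω, W₂ ω)))
      = ent p (fun ω => (Xn ω, Yn ω, M ω, W₁ ω, W₂ ω)) :=
    ent_comp p (fun ω => (Xn ω, Yn ω, M ω, W₁ ω, W₂ ω))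
      (f := fun z : α × β × γ × δ × ε =>
        ((z.2.1, z.2.2.2.1), (z.1, z.2.2.1, z.2.2.2.2)))
      (fun a b h => by simp_all [Prod.ext_iff])
  have c15 : ent p (fun ω => (W₂ ω, (Yn ω, M ω)))
      = ent p (fun ω => (Yn ω, M ω, W₂ ω)) :=
    ent_comp p (fun ω => (Yn ω, M ω, W₂ ω))
      (f := fun z : β × γ × ε => (z.2.2, (z.1, z.2.1)))
      (fun a b h => by simp_all [Prod.ext_iff])
  have c16 : ent p (fun ω => ((Xn ω, W₂ ω), (Yn ω, M ω)))
      = ent p (fun ω => (Xn ω, Yn ω, M ω, W₂ ω)) :=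
    ent_comp p (fun ω => (Xn ω, Yn ω, M ω, W₂ ω))
      (f := fun z : α × β × γ × ε => ((z.1, z.2.2.2), (z.2.1, z.2.2.1)))
      (fun a b h => by simp_all [Prod.ext_iff])
  have c17 : ent p (fun ω => (W₁ ω, (Xn ω, M ω)))
      = ent p (fun ω => (Xn ω, M ω, W₁ ω)) :=
    ent_comp p (fun ω => (Xn ω, M ω, W₁ ω))
      (f := fun z : α × γ × δ => (z.2.2, (z.1, z.2.1)))
      (fun a b h => by simp_all [Prod.ext_iff])
  have c18 : ent p (fun ω => (W₂ ω, (Xn ω, M ω)))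
      = ent p (fun ω => (Xn ω, M ω, W₂ ω)) :=
    ent_comp p (fun ω => (Xn ω, M ω, W₂ ω))
      (f := fun z : α × γ × ε => (z.2.2, (z.1, z.2.1)))
      (fun a b h => by simp_all [Prod.ext_iff])
  have c19 : ent p (fun ω => ((W₁ ω, W₂ ω), (Xn ω, M ω)))
      = ent p (fun ω => (Xn ω, M ω, W₁ ω, W₂ ω)) :=
    ent_comp p (fun ω => (Xn ω, M ω, W₁ ω, W₂ ω))
      (f := fun z : α × γ × δ × ε => ((z.2.2.1, z.2.2.2), (z.1, z.2.1)))
      (fun a b h => by simp_all [Prod.ext_iff])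
  have c20 : ent p (fun ω => ((Xn ω, Yn ω), (M ω, W₁ ω, W₂ ω)))
      = ent p (fun ω => (Xn ω, Yn ω, M ω, W₁ ω, W₂ ω)) :=
    ent_comp p (fun ω => (Xn ω, Yn ω, M ω, W₁ ω, W₂ ω))
      (f := fun z : α × β × γ × δ × ε => ((z.1, z.2.1), z.2.2))
      (fun a b h => by simp_all [Prod.ext_iff])
  simp only [cmi, centH, mi] at hMarkov1 hMarkov2 n1 n2 n3 n4 n5 n6 n7 hI ⊢
  rw [c2, c3] at hMarkov1
  rw [c6, c7] at hMarkov2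
  rw [c10] at n1
  rw [c11, c12, c13] at n2
  rw [c15, c16] at n3
  rw [c17, c18, c19] at n4
  rw [c20] at n5
  rw [c9]
  linarith
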